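/- Let F be a linear operator on a finite-dimensional complex Hilbert space K whose Jordan form contains a Jordan block of size m > 1 for an eigenvalue λ with |λ| = q^{1/2}, q > 1, and all eigenvalues μ of F satisfy |μ| ≤ q^{1/2}. Then for any orthonormal basis {e_i} of K, the quantity ∑_{i} ‖Fⁿe_i‖² is NOT O(qⁿ): there is a constant c > 0 such that ∑_i ‖Fⁿe_i‖² ≥ c·qⁿ·n^{2(m−1)} for all large n, where m is the maximal Jordan block size. -/

import Mathlib

open Finset

/-- If `F` has all eigenvalues of modulus `≤ √q` (`q > 1`), has a Jordan block of size
`m ≥ 2` for an eigenvalue `λ` of modulus exactly `√q`, and `m` is the maximal Jordan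
block size among eigenvalues of modulus `√q`, then `∑ i ‖Fⁿ eᵢ‖²` grows at least like
`c·qⁿ·n^{2(m−1)}`; in particular it is not `O(qⁿ)`. -/
theorem non_semisimple_growth (K : Type*) [NormedAddCommGroup K] [InnerProductSpace ℂ K]
    [FiniteDimensional ℂ K] (d : ℕ) (hd : Module.finrank ℂ K = d)
    (q : ℝ) (hq : 1 < q) (F : Module.End ℂ K)
    (hspec : ∀ μ ∈ spectrum ℂ F, ‖μ‖ ≤ Real.sqrt q)
    (m : ℕ) (hm : 2 ≤ m) (lam : ℂ) (hlam : ‖lam‖ = Real.sqrt q)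
    (v : K) (hv : ((F - lam • 1) ^ m) v = 0 ∧ ((F - lam • 1) ^ (m - 1)) v ≠ 0)
    (hmax : ∀ μ : ℂ, ‖μ‖ = Real.sqrt q → ∀ w : K,
      (∃ k : ℕ, ((F - μ • 1) ^ k) w = 0) → ((F - μ • 1) ^ m) w = 0)
    (e : OrthonormalBasis (Fin d) ℂ K) :
    ∃ c : ℝ, 0 < c ∧ ∃ N₀ : ℕ, ∀ n ≥ N₀,
      c * q ^ n * (n : ℝ) ^ (2 * (m - 1)) ≤ ∑ i, ‖(F ^ n) (e i)‖ ^ 2 := by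
  classical
  obtain ⟨hv1, hv2⟩ := hv
  have hq0 : (0:ℝ) ≤ q := le_of_lt (lt_trans one_pos hq)
  set s : ℝ := Real.sqrt q with hs_def
  have hs1 : (1:ℝ) < s := by
    rw [hs_def, show (1:ℝ) = Real.sqrt 1 by simp]
    exact Real.sqrt_lt_sqrt (by norm_num) hq
  have hs0 : (0:ℝ) < s := lt_trans one_pos hs1
  set M : ℕ := m - 1 with hM_def
  have hmM : m = M + 1 := by omega
  have hM1 : 1 ≤ M := by omega
  set N : Module.End ℂ K := F - lam • 1 with hN_def
  -- hv2 : (N ^ M) v ≠ 0 after the `set`s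
  have hvM : (N ^ M) v ≠ 0 := hv2
  have hvne : v ≠ 0 := fun h => hvM (by rw [h, map_zero])
  have hvm : ∀ k : ℕ, m ≤ k → (N ^ k) v = 0 := by
    intro k hk
    have hpow : N ^ k = N ^ (k - m) * N ^ m := by
      rw [← pow_add]; congr 1; omega
    rw [hpow, Module.End.mul_apply, hv1, map_zero]
  -- binomial expansion
  have hbin : ∀ n : ℕ, (F ^ n) v = ∑ k ∈ range (n+1),
      ((n.choose k : ℂ) * lam ^ (n - k)) • (N ^ k) v := by
    intro n
    have hc : Commute N (lam • (1 : Module.End ℂ K)) := (Commute.one_right N).smul_right lam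
    have hF : F = N + lam • 1 := by rw [hN_def, sub_add_cancel]
    rw [hF, hc.add_pow, LinearMap.sum_apply]
    refine Finset.sum_congr rfl fun k hk => ?_
    simp only [Module.End.mul_apply, smul_pow, one_pow, LinearMap.smul_apply,
      Module.End.natCast_apply, Module.End.one_apply, map_smul, Nat.cast_smul_eq_nsmul]
    rw [mul_smul, smul_comm, map_nsmul, Nat.cast_smul_eq_nsmul]
  -- truncated expansion
  have htrunc : ∀ n : ℕ, m ≤ n → (F ^ n) v =
      (∑ k ∈ range M, ((n.choose k : ℂ) * lam ^ (n - k)) • (N ^ k) v)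
      + ((n.choose M : ℂ) * lam ^ (n - M)) • (N ^ M) v := by
    intro n hn
    rw [hbin n, ← Finset.sum_range_succ, ← hmM]
    refine (Finset.sum_subset (Finset.range_subset_range.mpr (by omega)) fun k hk hk' => ?_).symm
    have hk2 : m ≤ k := by
      simp only [Finset.mem_range, not_lt] at hk'
      exact hk'
    rw [hvm k hk2, smul_zero]
  set a : ℝ := ‖(N ^ M) v‖ with ha_def
  have ha : 0 < a := norm_pos_iff.mpr hvM
  set B : ℝ := ∑ j ∈ range M, ‖(N ^ j) v‖ with hB_def
  have hB0 : 0 ≤ B := Finset.sum_nonneg fun _ _ => norm_nonneg _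
  set α : ℝ := a / (s ^ M * 2 ^ M * (M.factorial : ℝ)) with hα_def
  have hα : 0 < α := div_pos ha (by positivity)
  have hnormlam : ‖lam‖ = s := hlam
  -- key lower bound on ‖Fⁿ v‖
  have hkey : ∀ n : ℕ, m ≤ n → 2 * M ≤ n → 2 * B / α + 1 ≤ (n:ℝ) →
      α / 2 * (s ^ n * (n : ℝ) ^ M) ≤ ‖(F ^ n) v‖ := by
    intro n hnm hn2M hnB
    have hn1 : 1 ≤ n := le_trans (by omega) hnm
    have hn1' : (1:ℝ) ≤ (n:ℝ) := by exact_mod_cast hn1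
    -- main term
    have hmain : ‖((n.choose M : ℂ) * lam ^ (n - M)) • (N ^ M) v‖
        = (n.choose M : ℝ) * s ^ (n - M) * a := by
      rw [norm_smul, norm_mul, norm_pow, hnormlam, ← ha_def]
      norm_num
    -- rest bound
    have hrest : ‖∑ k ∈ range M, ((n.choose k : ℂ) * lam ^ (n - k)) • (N ^ k) v‖
        ≤ (n:ℝ) ^ (M - 1) * s ^ n * B := by
      refine (norm_sum_le _ _).trans ?_
      rw [hB_def, Finset.mul_sum]
      refine Finset.sum_le_sum fun k hk => ?_
      rw [norm_smul, norm_mul, norm_pow, hnormlam]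
      have h1 : (n.choose k : ℝ) ≤ (n:ℝ) ^ (M - 1) := by
        calc (n.choose k : ℝ) ≤ (n:ℝ) ^ k := by exact_mod_cast Nat.choose_le_pow n k
          _ ≤ (n:ℝ) ^ (M - 1) := by
              refine pow_le_pow_right₀ hn1' ?_
              have := Finset.mem_range.mp hk
              omega
      have h2 : s ^ (n - k) ≤ s ^ n := pow_le_pow_right₀ hs1.le (Nat.sub_le n k)
      have h3 : ‖(n.choose k : ℂ)‖ = (n.choose k : ℝ) := by norm_num
      rw [h3]
      have := mul_le_mul (mul_le_mul h1 h2 (by positivity) (by positivity))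
        (le_refl ‖(N ^ k) v‖) (norm_nonneg _) (by positivity)
      exact this
    -- choose lower bound
    have hchoose : (n:ℝ) ^ M / (2 ^ M * (M.factorial : ℝ)) ≤ (n.choose M : ℝ) := by
      have hp := Nat.pow_le_choose (α := ℝ) M n
      have hcast : ((n + 1 - M : ℕ) : ℝ) = (n:ℝ) + 1 - (M:ℝ) := by
        have : M ≤ n + 1 := by omega
        push_cast [Nat.cast_sub this]
        try ring
      have hhalf : (n:ℝ) / 2 ≤ ((n + 1 - M : ℕ) : ℝ) := by
        rw [hcast]
        have : (2:ℝ) * M ≤ (n:ℝ) := by exact_mod_cast hn2M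
        linarith
      calc (n:ℝ) ^ M / (2 ^ M * (M.factorial : ℝ))
          = ((n:ℝ)/2) ^ M / (M.factorial : ℝ) := by
            rw [div_pow]; ring
        _ ≤ ((n + 1 - M : ℕ) : ℝ) ^ M / (M.factorial : ℝ) := by
            gcongr
        _ ≤ (n.choose M : ℝ) := hp
    -- main term is large
    have hmain_ge : α * (s ^ n * (n:ℝ) ^ M) ≤ (n.choose M : ℝ) * s ^ (n - M) * a := by
      have hsub : s ^ (n - M) = s ^ n / s ^ M := by
        rw [eq_div_iff (by positivity), ← pow_add]
        congr 1; omega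
      have heq : α * (s ^ n * (n:ℝ) ^ M)
          = (n:ℝ) ^ M / (2 ^ M * (M.factorial:ℝ)) * (s ^ (n - M) * a) := by
        rw [hsub, hα_def]
        field_simp
      rw [heq]
      calc (n:ℝ) ^ M / (2 ^ M * (M.factorial:ℝ)) * (s ^ (n - M) * a)
          ≤ (n.choose M : ℝ) * (s ^ (n - M) * a) := by
            gcongr
        _ = (n.choose M : ℝ) * s ^ (n - M) * a := by ring
    -- rest is small
    have hrest_small : (n:ℝ) ^ (M - 1) * s ^ n * B ≤ α / 2 * (s ^ n * (n:ℝ) ^ M) := by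
      have hMsucc : M = (M - 1) + 1 := by omega
      have hnM : (n:ℝ) ^ M = (n:ℝ) ^ (M-1) * (n:ℝ) := by
        conv_lhs => rw [hMsucc]
        rw [pow_succ]
      rw [hnM]
      have hBn : B ≤ α / 2 * (n:ℝ) := by
        have h1 : 2 * B / α ≤ (n:ℝ) := by linarith
        have h2 : B = α / 2 * (2 * B / α) := by field_simp
        rw [h2]
        gcongr
      calc (n:ℝ) ^ (M-1) * s ^ n * B ≤ (n:ℝ) ^ (M-1) * s ^ n * (α / 2 * (n:ℝ)) := by
            gcongr
        _ = α / 2 * (s ^ n * ((n:ℝ) ^ (M-1) * (n:ℝ))) := by ring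
    -- combine
    rw [htrunc n hnm]
    have htri : ‖((n.choose M : ℂ) * lam ^ (n - M)) • (N ^ M) v‖
        - ‖∑ k ∈ range M, ((n.choose k : ℂ) * lam ^ (n - k)) • (N ^ k) v‖
        ≤ ‖(∑ k ∈ range M, ((n.choose k : ℂ) * lam ^ (n - k)) • (N ^ k) v)
          + ((n.choose M : ℂ) * lam ^ (n - M)) • (N ^ M) v‖ := by
      have := norm_sub_le
        ((∑ k ∈ range M, ((n.choose k : ℂ) * lam ^ (n - k)) • (N ^ k) v)
          + ((n.choose M : ℂ) * lam ^ (n - M)) • (N ^ M) v)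
        (∑ k ∈ range M, ((n.choose k : ℂ) * lam ^ (n - k)) • (N ^ k) v)
      simp only [add_sub_cancel_left] at this
      linarith
    rw [hmain] at htri
    linarith
  -- Hilbert–Schmidt type bound
  have hA : ∀ (T : Module.End ℂ K) (x : K), ‖T x‖ ^ 2 ≤ ‖x‖ ^ 2 * ∑ i, ‖T (e i)‖ ^ 2 := by
    intro T x
    have hx : T x = ∑ i, e.repr x i • T (e i) := by
      conv_lhs => rw [← e.sum_repr x]
      rw [map_sum]; simp [map_smul]
    have h1 : ‖T x‖ ≤ ∑ i, ‖e.repr x i‖ * ‖T (e i)‖ := by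
      rw [hx]
      refine (norm_sum_le _ _).trans ?_
      simp [norm_smul]
    have h2 : (∑ i, ‖e.repr x i‖ * ‖T (e i)‖) ^ 2
        ≤ (∑ i, ‖e.repr x i‖ ^ 2) * ∑ i, ‖T (e i)‖ ^ 2 :=
      Finset.sum_mul_sq_le_sq_mul_sq _ _ _
    have h3 : ∑ i, ‖e.repr x i‖ ^ 2 = ‖x‖ ^ 2 := by
      rw [← e.repr.norm_map x, EuclideanSpace.norm_eq, Real.sq_sqrt]
      exact Finset.sum_nonneg fun i _ => sq_nonneg _
    calc ‖T x‖ ^ 2 ≤ (∑ i, ‖e.repr x i‖ * ‖T (e i)‖) ^ 2 :=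
          pow_le_pow_left₀ (norm_nonneg _) h1 2
      _ ≤ _ := by rw [← h3]; exact h2
  have hv0 : 0 < ‖v‖ := norm_pos_iff.mpr hvne
  refine ⟨α ^ 2 / (4 * ‖v‖ ^ 2), by positivity, max m (max (2 * M) (⌈2 * B / α⌉₊ + 1)), ?_⟩
  intro n hn
  have hnm : m ≤ n := le_trans (le_max_left _ _) hn
  have hn2M : 2 * M ≤ n := le_trans (le_trans (le_max_left _ _) (le_max_right _ _)) hn
  have hnB : 2 * B / α + 1 ≤ (n:ℝ) := by
    have h1 : (⌈2 * B / α⌉₊ + 1 : ℕ) ≤ n :=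
      le_trans (le_trans (le_max_right _ _) (le_max_right _ _)) hn
    have h2 : 2 * B / α ≤ (⌈2 * B / α⌉₊ : ℝ) := Nat.le_ceil _
    have h3 : ((⌈2 * B / α⌉₊ + 1 : ℕ) : ℝ) ≤ (n:ℝ) := by exact_mod_cast h1
    push_cast at h3
    linarith
  have hk := hkey n hnm hn2M hnB
  have hsq : (α / 2 * (s ^ n * (n:ℝ) ^ M)) ^ 2 ≤ ‖(F ^ n) v‖ ^ 2 :=
    pow_le_pow_left₀ (by positivity) hk 2
  have hAn := hA (F ^ n) v
  have hexp : (α / 2 * (s ^ n * (n:ℝ) ^ M)) ^ 2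
      = α ^ 2 / 4 * (q ^ n * (n:ℝ) ^ (2 * M)) := by
    have h1 : (s ^ n) ^ 2 = q ^ n := by
      rw [← pow_mul, mul_comm n 2, pow_mul, hs_def, Real.sq_sqrt hq0]
    have h2 : ((n:ℝ) ^ M) ^ 2 = (n:ℝ) ^ (2 * M) := by
      rw [← pow_mul, mul_comm]
    calc (α / 2 * (s ^ n * (n:ℝ) ^ M)) ^ 2
        = α ^ 2 / 4 * ((s ^ n) ^ 2 * ((n:ℝ) ^ M) ^ 2) := by ring
      _ = _ := by rw [h1, h2]
    -- done
  have hfinal : α ^ 2 / 4 * (q ^ n * (n:ℝ) ^ (2 * M)) ≤ ‖v‖ ^ 2 * ∑ i, ‖(F ^ n) (e i)‖ ^ 2 := by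
    rw [← hexp]
    exact le_trans hsq hAn
  rw [div_mul_eq_mul_div, div_mul_eq_mul_div, div_le_iff₀ (by positivity)]
  calc α ^ 2 * q ^ n * (n:ℝ) ^ (2 * M)
      = (α ^ 2 / 4 * (q ^ n * (n:ℝ) ^ (2 * M))) * 4 := by ring
    _ ≤ (‖v‖ ^ 2 * ∑ i, ‖(F ^ n) (e i)‖ ^ 2) * 4 := by gcongr
    _ = (∑ i, ‖(F ^ n) (e i)‖ ^ 2) * (4 * ‖v‖ ^ 2) := by ring
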